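/- Let (λ, ρ, s) and (λ', ρ', s') be homothetic data on a ring R, and define a ⋄ b = a·b + ρ(a) + λ(b) + s and a ⋄' b = a·b + ρ'(a) + λ'(b) + s'. Suppose Ψ : R → R is a bijection satisfying Ψ(a − b + c) = Ψ(a) − Ψ(b) + Ψ(c) and Ψ(a ⋄ b) = Ψ(a) ⋄' Ψ(b) for all a, b, c ∈ R. Then Φ : a ↦ Ψ(a) − Ψ(0) is a ring automorphism of R, and with v = −Ψ⁻¹(0) one has s' = Φ(s + v + v² − ρ(v) − λ(v)), λ'(a) = Φ(λ(Φ⁻¹(a)) − v·Φ⁻¹(a)) and ρ'(a) = Φ(ρ(Φ⁻¹(a)) − Φ⁻¹(a)·v) for all a ∈ R. -/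
import Mathlib


/-- If `Ψ` is an isomorphism of the homothetic trusses `T(σ,s)` and `T(σ',s')`
(a bijection preserving the heap bracket and intertwining the truss products),
then `Φ : a ↦ Ψ(a) − Ψ(0)` is a ring automorphism of `R` and, with
`v = −Ψ⁻¹(0)`, the data `(λ', ρ', s')` arise from `(λ, ρ, s)` by the standard
transformation. -/
theorem homothetic_truss_iso_gives_transform {R : Type*} [NonUnitalRing R]
    (lam rho lam' rho' : R →+ R) (s s' : R)
    (hlam : ∀ a b : R, lam (a * b) = lam a * b)
    (hrho : ∀ a b : R, rho (a * b) = a * rho b)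
    (hmid : ∀ a b : R, a * lam b = rho a * b)
    (hperm : ∀ a : R, rho (lam a) = lam (rho a))
    (hs : lam s = rho s)
    (hll : ∀ a : R, lam (lam a) = lam a + s * a)
    (hrr : ∀ a : R, rho (rho a) = rho a + a * s)
    (hlam' : ∀ a b : R, lam' (a * b) = lam' a * b)
    (hrho' : ∀ a b : R, rho' (a * b) = a * rho' b)
    (hmid' : ∀ a b : R, a * lam' b = rho' a * b)
    (hperm' : ∀ a : R, rho' (lam' a) = lam' (rho' a))
    (hs' : lam' s' = rho' s')
    (hll' : ∀ a : R, lam' (lam' a) = lam' a + s' * a)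
    (hrr' : ∀ a : R, rho' (rho' a) = rho' a + a * s')
    (Ψ : R → R) (hbij : Function.Bijective Ψ)
    (hheap : ∀ a b c : R, Ψ (a - b + c) = Ψ a - Ψ b + Ψ c)
    (hmul : ∀ a b : R, Ψ (a * b + rho a + lam b + s)
        = Ψ a * Ψ b + rho' (Ψ a) + lam' (Ψ b) + s') :
    ∃ (Φ : R ≃+* R) (v : R),
      (∀ a : R, Φ a = Ψ a - Ψ 0) ∧
      Ψ (-v) = 0 ∧
      s' = Φ (s + v + v * v - rho v - lam v) ∧
      (∀ a : R, lam' a = Φ (lam (Φ.symm a) - v * Φ.symm a)) ∧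
      (∀ a : R, rho' a = Φ (rho (Φ.symm a) - Φ.symm a * v)) := by
  have hadd : ∀ a b : R, Ψ (a + b) = Ψ a - Ψ 0 + Ψ b := by
    intro a b; simpa using hheap a 0 b
  have hmul2 : ∀ a b : R, Ψ (a * b) - Ψ 0 = (Ψ a - Ψ 0) * (Ψ b - Ψ 0) := by
    intro a b
    have h1 := hmul a b
    have h2 : Ψ (rho a + s) = Ψ a * Ψ 0 + rho' (Ψ a) + lam' (Ψ 0) + s' := by
      simpa using hmul a 0
    have h3 : Ψ (lam b + s) = Ψ 0 * Ψ b + rho' (Ψ 0) + lam' (Ψ b) + s' := by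
      simpa using hmul 0 b
    have h4 : Ψ s = Ψ 0 * Ψ 0 + rho' (Ψ 0) + lam' (Ψ 0) + s' := by
      simpa using hmul 0 0
    have k' := hheap s (lam b + s) 0
    have k := hheap (a * b + rho a + lam b + s) (rho a + s) (s - (lam b + s) + 0)
    rw [show (a * b + rho a + lam b + s) - (rho a + s) + (s - (lam b + s) + 0) = a * b
      by abel] at k
    rw [k', h1, h2, h3, h4] at k
    rw [k]; noncomm_ring
  let E : R ≃ R := (Equiv.ofBijective Ψ hbij).trans (Equiv.subRight (Ψ 0))
  let Φ : R ≃+* R :=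
    { E with
      map_add' := fun a b => by
        show Ψ (a + b) - Ψ 0 = (Ψ a - Ψ 0) + (Ψ b - Ψ 0)
        rw [hadd]; abel
      map_mul' := fun a b => by
        show Ψ (a * b) - Ψ 0 = (Ψ a - Ψ 0) * (Ψ b - Ψ 0)
        exact hmul2 a b }
  have hΦ : ∀ a : R, Φ a = Ψ a - Ψ 0 := fun a => rfl
  set v : R := -((Equiv.ofBijective Ψ hbij).symm 0) with hv
  have hΨv : Ψ (-v) = 0 := by
    rw [hv, neg_neg]
    exact (Equiv.ofBijective Ψ hbij).apply_symm_apply 0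
  have hΦv : Φ v = Ψ 0 := by
    have h : Φ (-v) = -Ψ 0 := by rw [hΦ, hΨv, zero_sub]
    rw [map_neg] at h
    exact neg_inj.mp h
  have hΨ' : ∀ a : R, Ψ a = Φ a + Ψ 0 := by
    intro a; rw [hΦ]; abel
  have hsE : Ψ (v * v - rho v - lam v + s) = s' := by
    have h := hmul (-v) (-v)
    rw [hΨv] at h
    simp only [zero_mul, map_zero, zero_add, mul_zero] at h
    rw [show v * v - rho v - lam v + s = -v * -v + rho (-v) + lam (-v) + s by
      simp only [map_neg]; noncomm_ring]
    exact h
  have hs'' : s' = Φ (s + v + v * v - rho v - lam v) := by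
    have h : s' = Φ (v * v - rho v - lam v + s) + Ψ 0 := by rw [← hΨ', hsE]
    rw [h, ← hΦv, ← map_add]
    exact congrArg Φ (by abel)
  have keyL : ∀ b : R, lam' (Φ b) = Φ (lam b - v * b) := by
    intro b
    have h := hmul (-v) (b - v)
    rw [hΨv] at h
    simp only [zero_mul, map_zero, zero_add] at h
    have hbv : Ψ (b - v) = Φ b := by
      rw [hΨ' (b - v), map_sub, hΦv]; abel
    rw [hbv, hΨ', ← hΦv, hs''] at h
    have h2 : lam' (Φ b) =
        Φ (-v * (b - v) + rho (-v) + lam (b - v) + s) + Φ v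
          - Φ (s + v + v * v - rho v - lam v) :=
      eq_sub_of_add_eq h.symm
    rw [h2, ← map_add, ← map_sub]
    exact congrArg Φ (by simp only [map_sub, map_neg]; noncomm_ring)
  have keyR : ∀ b : R, rho' (Φ b) = Φ (rho b - b * v) := by
    intro b
    have h := hmul (b - v) (-v)
    rw [hΨv] at h
    simp only [mul_zero, map_zero, add_zero, zero_add] at h
    have hbv : Ψ (b - v) = Φ b := by
      rw [hΨ' (b - v), map_sub, hΦv]; abel
    rw [hbv, hΨ', ← hΦv, hs''] at h
    have h2 : rho' (Φ b) =
        Φ ((b - v) * -v + rho (b - v) + lam (-v) + s) + Φ v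
          - Φ (s + v + v * v - rho v - lam v) :=
      eq_sub_of_add_eq h.symm
    rw [h2, ← map_add, ← map_sub]
    exact congrArg Φ (by simp only [map_sub, map_neg]; noncomm_ring)
  refine ⟨Φ, v, hΦ, hΨv, hs'', fun a => ?_, fun a => ?_⟩
  · have h := keyL (Φ.symm a); rwa [Φ.apply_symm_apply] at h
  · have h := keyR (Φ.symm a); rwa [Φ.apply_symm_apply] at h
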